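/- For every k ≥ 1, x(C_{2k+1}) = 1 + 1/(2k). -/

import Mathlib

attribute [local instance] Classical.propDecidable

/-- A cut in a graph: the set of edges leaving some vertex set `W`. -/
def IsCut {V : Type*} (G : SimpleGraph V) (X : Set (Sym2 V)) : Prop :=
  ∃ W : Set V, X = {e | e ∈ G.edgeSet ∧ ∃ a b, e = s(a, b) ∧ a ∈ W ∧ b ∉ W}

/-- An `n/k`-cover: `n` cuts covering every edge at least `k` times. -/
def HasCover {V : Type*} (G : SimpleGraph V) (n k : ℕ) : Prop :=
  ∃ X : Fin n → Set (Sym2 V), (∀ i, IsCut G (X i)) ∧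
    ∀ e ∈ G.edgeSet, k ≤ (Finset.univ.filter fun i => e ∈ X i).card

/-- The fractional cut-covering number `x(G)`. -/
noncomputable def cutCover {V : Type*} (G : SimpleGraph V) : ℝ :=
  sInf { q : ℝ | ∃ n k : ℕ, 0 < k ∧ q = n / k ∧ HasCover G n k }

open SimpleGraph
open Fin.NatCast Fin.CommRing

variable {k : ℕ}


lemma val_one_eq (hk : 1 ≤ k) : ((1 : Fin (2*k+1)) : ℕ) = 1 := by
  rw [Fin.val_one']; exact Nat.mod_eq_of_lt (by omega)

lemma val_succ (hk : 1 ≤ k) (v : Fin (2*k+1)) :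
    ((v + 1 : Fin (2*k+1)) : ℕ) = if (v : ℕ) = 2*k then 0 else (v : ℕ) + 1 := by
  rw [Fin.add_def, val_one_eq hk]
  split_ifs with h
  · rw [h]; simp
  · exact Nat.mod_eq_of_lt (by have := v.isLt; omega)

lemma edge_mem (hk : 1 ≤ k) (v : Fin (2*k+1)) :
    s(v, v+1) ∈ (cycleGraph (2*k+1)).edgeSet := by
  rw [SimpleGraph.mem_edgeSet, cycleGraph_adj']
  right
  simp only [add_sub_cancel_left]
  exact val_one_eq hk

lemma edge_repr (hk : 1 ≤ k) (e : Sym2 (Fin (2*k+1)))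
    (he : e ∈ (cycleGraph (2*k+1)).edgeSet) : ∃ v, e = s(v, v+1) := by
  induction e using Sym2.ind with
  | _ a b =>
    rw [SimpleGraph.mem_edgeSet, cycleGraph_adj'] at he
    rcases he with h | h
    · have : a = b + 1 := by
        rw [← sub_eq_iff_eq_add']; exact Fin.ext (by rw [val_one_eq hk]; exact h)
      exact ⟨b, by rw [this, Sym2.eq_swap]⟩
    · have : b = a + 1 := by
        rw [← sub_eq_iff_eq_add']; exact Fin.ext (by rw [val_one_eq hk]; exact h)
      exact ⟨a, by rw [this]⟩

lemma edge_inj (hk : 1 ≤ k) {u v : Fin (2*k+1)} (h : s(u, u+1) = s(v, v+1)) : u = v := by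
  rw [Sym2.eq_iff] at h
  rcases h with ⟨h1, _⟩ | ⟨h1, h2⟩
  · exact h1
  · exfalso
    have e1 := congrArg Fin.val h1
    have e2 := congrArg Fin.val h2
    rw [val_succ hk] at e1 e2
    have hu := u.isLt; have hv := v.isLt
    split_ifs at e1 e2 <;> omega

def cutOf (G : SimpleGraph (Fin (2*k+1))) (W : Set (Fin (2*k+1))) : Set (Sym2 (Fin (2*k+1))) :=
  {e | e ∈ G.edgeSet ∧ ∃ a b, e = s(a, b) ∧ a ∈ W ∧ b ∉ W}

lemma cut_mem_iff (hk : 1 ≤ k) (W : Set (Fin (2*k+1))) (v : Fin (2*k+1)) :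
    s(v, v+1) ∈ cutOf (cycleGraph (2*k+1)) W ↔
      ((v ∈ W ∧ v+1 ∉ W) ∨ (v+1 ∈ W ∧ v ∉ W)) := by
  constructor
  · rintro ⟨-, a, b, hab, ha, hb⟩
    rw [Sym2.eq_iff] at hab
    obtain ⟨rfl, rfl⟩ | ⟨rfl, rfl⟩ := hab
    · exact Or.inl ⟨ha, hb⟩
    · exact Or.inr ⟨ha, hb⟩
  · rintro (⟨h1, h2⟩ | ⟨h1, h2⟩)
    · exact ⟨edge_mem hk v, v, v+1, rfl, h1, h2⟩
    · exact ⟨edge_mem hk v, v+1, v, Sym2.eq_swap, h1, h2⟩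

-- a cut misses some edge
lemma cut_misses (hk : 1 ≤ k) (W : Set (Fin (2*k+1))) :
    ∃ v : Fin (2*k+1), s(v, v+1) ∉ cutOf (cycleGraph (2*k+1)) W := by
  by_contra h
  push_neg at h
  have hx : ∀ v : Fin (2*k+1), (v ∈ W ↔ v + 1 ∉ W) := by
    intro v
    have := (cut_mem_iff hk W v).1 (h v)
    tauto
  have key : ∀ m : ℕ, ∀ v : Fin (2*k+1), v + (2*m : ℕ) ∈ W ↔ v ∈ W := by
    intro m
    induction m with
    | zero => simp
    | succ m ih =>
      intro v
      have : ((2*(m+1) : ℕ) : Fin (2*k+1)) = ((2*m : ℕ) : Fin (2*k+1)) + 1 + 1 := by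
        push_cast; ring
      rw [this, ← add_assoc, ← add_assoc]
      have a1 := hx (v + (2*m : ℕ) + 1)
      have a2 := hx (v + (2*m : ℕ))
      have a3 := ih v
      tauto
  have h1 : ∀ v : Fin (2*k+1), v + (2*k : ℕ) + 1 = v := by
    intro v
    have : ((2*k : ℕ) : Fin (2*k+1)) + 1 = 0 := by
      have h0 : (((2*k+1 : ℕ)) : Fin (2*k+1)) = 0 := Fin.natCast_self _
      push_cast at h0 ⊢
      linear_combination h0
    rw [add_assoc, this, add_zero]
  have := hx ((0 : Fin (2*k+1)) + (2*k : ℕ))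
  rw [h1, key k 0] at this
  tauto



noncomputable def E' (k : ℕ) : Finset (Sym2 (Fin (2*k+1))) :=
  (Finset.univ : Finset (Fin (2*k+1))).image (fun v => s(v, v+1))

lemma E'_card (hk : 1 ≤ k) : (E' k).card = 2*k+1 := by
  rw [E', Finset.card_image_of_injective _ (fun u v h => edge_inj hk h), Finset.card_univ,
    Fintype.card_fin]

lemma lower_bound (hk : 1 ≤ k) {n m : ℕ}
    (hc : HasCover (SimpleGraph.cycleGraph (2*k+1)) n m) : (2*k+1) * m ≤ n * (2*k) := by
  obtain ⟨X, hcut, hcov⟩ := hc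
  have swap : ∑ e ∈ E' k, (Finset.univ.filter fun i => e ∈ X i).card
      = ∑ i : Fin n, ((E' k).filter fun e => e ∈ X i).card := by
    simp only [Finset.card_filter]
    exact Finset.sum_comm
  have lo : (2*k+1) * m ≤ ∑ e ∈ E' k, (Finset.univ.filter fun i => e ∈ X i).card := by
    have : ∀ e ∈ E' k, m ≤ (Finset.univ.filter fun i => e ∈ X i).card := by
      intro e he
      obtain ⟨v, -, rfl⟩ := Finset.mem_image.1 he
      exact hcov _ (edge_mem hk v)
    calc (2*k+1) * m = ∑ _e ∈ E' k, m := by rw [Finset.sum_const, E'_card hk, smul_eq_mul]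
    _ ≤ _ := Finset.sum_le_sum this
  have hi : ∀ i : Fin n, ((E' k).filter fun e => e ∈ X i).card ≤ 2*k := by
    intro i
    obtain ⟨W, hW⟩ := hcut i
    have hXi : X i = cutOf (SimpleGraph.cycleGraph (2*k+1)) W := hW
    obtain ⟨v, hv⟩ := cut_misses hk W
    have hsub : ((E' k).filter fun e => e ∈ X i) ⊆ (E' k).erase s(v, v+1) := by
      intro e he
      rw [Finset.mem_filter] at he
      refine Finset.mem_erase.2 ⟨?_, he.1⟩
      rintro rfl
      exact hv (hXi ▸ he.2)
    calc ((E' k).filter fun e => e ∈ X i).card ≤ ((E' k).erase s(v, v+1)).card :=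
          Finset.card_le_card hsub
    _ = 2*k := by
        rw [Finset.card_erase_of_mem (by rw [E']; exact Finset.mem_image_of_mem _ (Finset.mem_univ v)),
          E'_card hk]
        omega
  calc (2*k+1) * m ≤ _ := lo
  _ = _ := swap
  _ ≤ ∑ _i : Fin n, 2*k := Finset.sum_le_sum fun i _ => hi i
  _ = n * (2*k) := by rw [Finset.sum_const, Finset.card_univ, Fintype.card_fin, smul_eq_mul]

lemma neg_one_cast (hk : 1 ≤ k) : ((2*k : ℕ) : Fin (2*k+1)) = -1 := by
  have h0 : (((2*k+1 : ℕ)) : Fin (2*k+1)) = 0 := Fin.natCast_self _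
  push_cast at h0 ⊢
  linear_combination h0

lemma upper_bound (hk : 1 ≤ k) :
    HasCover (SimpleGraph.cycleGraph (2*k+1)) (2*k+1) (2*k) := by
  refine ⟨fun i => cutOf (SimpleGraph.cycleGraph (2*k+1))
      {v | ((v - i : Fin (2*k+1)) : ℕ) % 2 = 1}, fun i => ⟨_, rfl⟩, ?_⟩
  intro e he
  obtain ⟨v, rfl⟩ := edge_repr hk e he
  have hsub : (Finset.univ : Finset (Fin (2*k+1))).erase (v+1) ⊆
      Finset.univ.filter fun i => s(v, v+1) ∈ cutOf (SimpleGraph.cycleGraph (2*k+1))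
        {u | ((u - i : Fin (2*k+1)) : ℕ) % 2 = 1} := by
    intro i hi
    rw [Finset.mem_erase] at hi
    refine Finset.mem_filter.2 ⟨Finset.mem_univ _, ?_⟩
    rw [cut_mem_iff hk]
    have hd : ((v - i : Fin (2*k+1)) : ℕ) ≠ 2*k := by
      intro hd
      apply hi.1
      have hc : (v - i : Fin (2*k+1)) = -1 := by
        rw [← neg_one_cast hk]
        exact Fin.ext (by rw [hd, Fin.val_natCast, Nat.mod_eq_of_lt (by omega)])
      have : i = v - (v - i) := by ring
      rw [this, hc]; ring
    have hstep : v + 1 - i = (v - i) + 1 := by ring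
    have hd2 : ((v + 1 - i : Fin (2*k+1)) : ℕ) = ((v - i : Fin (2*k+1)) : ℕ) + 1 := by
      rw [hstep, val_succ hk]
      simp [hd]
    simp only [Set.mem_setOf_eq, hd2]
    omega
  calc 2*k = ((Finset.univ : Finset (Fin (2*k+1))).erase (v+1)).card := by
        rw [Finset.card_erase_of_mem (Finset.mem_univ _), Finset.card_univ, Fintype.card_fin]
        omega
  _ ≤ _ := Finset.card_le_card hsub

/-- `x(C_{2k+1}) = 1 + 1/(2k)`. -/
theorem cutCover_oddCycle (k : ℕ) (hk : 1 ≤ k) :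
    cutCover (SimpleGraph.cycleGraph (2 * k + 1)) = 1 + 1 / (2 * (k : ℝ)) := by
  have hk1 : (1:ℝ) ≤ (k:ℝ) := by exact_mod_cast hk
  have hkpos : (0:ℝ) < 2*(k:ℝ) := by linarith
  have hceq : ((2*k+1 : ℕ) : ℝ) / ((2*k : ℕ) : ℝ) = 1 + 1/(2*(k:ℝ)) := by
    push_cast
    field_simp
  have hmem : (1 + 1/(2*(k:ℝ))) ∈
      { q : ℝ | ∃ n m : ℕ, 0 < m ∧ q = n / m ∧ HasCover (SimpleGraph.cycleGraph (2*k+1)) n m } :=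
    ⟨2*k+1, 2*k, by omega, hceq.symm, upper_bound hk⟩
  have hlb : ∀ q ∈ { q : ℝ | ∃ n m : ℕ, 0 < m ∧ q = n / m ∧
      HasCover (SimpleGraph.cycleGraph (2*k+1)) n m }, 1 + 1/(2*(k:ℝ)) ≤ q := by
    rintro q ⟨n, m, hm, rfl, hc⟩
    have h := lower_bound hk hc
    rw [← hceq, div_le_div_iff₀ (by push_cast; linarith) (by exact_mod_cast hm)]
    push_cast
    have h' : ((2*k+1) * m : ℝ) ≤ (n * (2*k) : ℝ) := by exact_mod_cast h
    push_cast at h'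
    linarith
  exact le_antisymm (csInf_le ⟨_, hlb⟩ hmem) (le_csInf ⟨_, hmem⟩ hlb)
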